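/- Let (X,d) be a metric space satisfying the ⊠-inequalities. Suppose x,y,z ∈ X with x ≠ z and d(x,z) = d(x,y) + d(y,z). Set t = d(x,y)/d(x,z). Then for every w ∈ X, d(y,w)² ≤ (1−t)d(x,w)² + t d(z,w)² − t(1−t)d(x,z)². -/

import Mathlib

noncomputable section

/-- A metric space satisfies the ⊠-inequalities. -/
def BoxIneq (X : Type*) [MetricSpace X] : Prop :=
  ∀ t ∈ Set.Icc (0:ℝ) 1, ∀ s ∈ Set.Icc (0:ℝ) 1, ∀ x y z w : X,
    0 ≤ (1 - t) * (1 - s) * dist x y ^ 2 + t * (1 - s) * dist y z ^ 2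
      + t * s * dist z w ^ 2 + (1 - t) * s * dist w x ^ 2
      - t * (1 - t) * dist x z ^ 2 - s * (1 - s) * dist y w ^ 2

/-- If `y` lies metrically between `x` and `z` in a space satisfying the ⊠-inequalities,
then the CAT(0) comparison inequality holds at `y` for every `w`. -/
theorem boxIneq_comparison {X : Type*} [MetricSpace X] (hX : BoxIneq X)
    (x y z : X) (hxz : x ≠ z) (hbtw : dist x z = dist x y + dist y z) (w : X) :
    dist y w ^ 2
      ≤ (1 - dist x y / dist x z) * dist x w ^ 2 + (dist x y / dist x z) * dist z w ^ 2
        - (dist x y / dist x z) * (1 - dist x y / dist x z) * dist x z ^ 2 := by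
  set D := dist x z with hDdef
  have hD : 0 < D := dist_pos.mpr hxz
  set t := dist x y / D with htdef
  have hxy : dist x y = t * D := by rw [htdef]; exact (div_mul_cancel₀ _ hD.ne').symm
  have hyz : dist y z = (1 - t) * D := by
    have : dist y z = D - dist x y := by linarith
    rw [this, hxy]; ring
  have ht0 : 0 ≤ t := div_nonneg dist_nonneg hD.le
  have ht1 : t ≤ 1 := by
    rw [htdef, div_le_one hD]
    have := dist_nonneg (x := y) (y := z)
    linarith
  have key : ∀ s : ℝ, 0 < s → s ≤ 1 →
      0 ≤ (1 - t) * dist x w ^ 2 + t * dist z w ^ 2 - t * (1 - t) * D ^ 2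
        - (1 - s) * dist y w ^ 2 := by
    intro s hs0 hs1
    have h := hX t ⟨ht0, ht1⟩ s ⟨hs0.le, hs1⟩ x y z w
    rw [hxy, hyz, dist_comm w x] at h
    have h2 : 0 ≤ s * ((1 - t) * dist x w ^ 2 + t * dist z w ^ 2 - t * (1 - t) * D ^ 2
        - (1 - s) * dist y w ^ 2) := by nlinarith [h]
    exact nonneg_of_mul_nonneg_right h2 hs0
  by_contra hcon
  push_neg at hcon
  set A : ℝ := (1 - t) * dist x w ^ 2 + t * dist z w ^ 2 - t * (1 - t) * D ^ 2
    - dist y w ^ 2 with hA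
  set B : ℝ := dist y w ^ 2 with hB
  have hAneg : A < 0 := by rw [hA]; nlinarith [hcon]
  have hBnn : 0 ≤ B := sq_nonneg _
  set s : ℝ := min 1 ((-A) / (B + 1)) with hs
  have hs0 : 0 < s := lt_min one_pos (div_pos (by linarith) (by linarith))
  have hs1 : s ≤ 1 := min_le_left _ _
  have hk := key s hs0 hs1
  have hsle : s ≤ (-A) / (B + 1) := min_le_right _ _
  have hsB : s * B ≤ ((-A) / (B + 1)) * B := mul_le_mul_of_nonneg_right hsle hBnn
  have hfrac : ((-A) / (B + 1)) * B < -A := by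
    rw [div_mul_eq_mul_div, div_lt_iff₀ (by linarith : (0:ℝ) < B + 1)]
    nlinarith
  have : 0 ≤ A + s * B := by rw [hA, hB]; nlinarith [hk]
  linarith
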